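/- Under consistency, ignorability, and monotonicity at every outcome level, the weighted sum of marginal probabilities of causation equals the difference of conditional means: Σ_{y ∈ L} y · P(Y₀ ≠ y and Y₁ = y) = E[Y | Z = z] − E[Y | Z ≠ z]. -/

import Mathlib

open MeasureTheory ProbabilityTheory

/-- Integral of a function taking values in a finite set `L`, as a weighted sum. -/
lemma integral_of_finsetValued {Ω : Type*} [MeasurableSpace Ω]
    (ν : Measure Ω) [IsFiniteMeasure ν] (L : Finset ℝ) (W : Ω → ℝ)
    (hW : Measurable W) (hWL : ∀ ω, W ω ∈ L) :
    ∫ ω, W ω ∂ν = ∑ y ∈ L, y * (ν {ω | W ω = y}).toReal := by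
  have hms : ∀ y : ℝ, MeasurableSet {ω | W ω = y} := fun y =>
    hW (measurableSet_singleton y)
  have hrep : (fun ω => W ω)
      = fun ω => ∑ y ∈ L, Set.indicator {ω' | W ω' = y} (fun _ => y) ω := by
    funext ω
    have h1 : ∀ y ∈ L, Set.indicator {ω' | W ω' = y} (fun _ => y) ω
        = if W ω = y then y else 0 := by
      intro y _; simp [Set.indicator, Set.mem_setOf_eq]
    rw [Finset.sum_congr rfl h1, Finset.sum_ite_eq L (W ω) (fun y => y),
      if_pos (hWL ω)]
  rw [hrep, integral_finset_sum L (fun y _ => (integrable_const y).indicator (hms y))]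
  refine Finset.sum_congr rfl fun y _ => ?_
  rw [integral_indicator_const y (hms y), smul_eq_mul, mul_comm]
  rfl

theorem mpoc_weighted_sum_eq_conditional_mean_difference
    {Ω 𝒵 : Type*} [MeasurableSpace Ω]
    (μ : Measure Ω) [IsProbabilityMeasure μ]
    (L : Finset ℝ) (hL : ∀ x ∈ L, 0 ≤ x)
    (Z : Ω → 𝒵) (z : 𝒵)
    (Y Y1 Y0 : Ω → ℝ)
    (hYm : Measurable Y) (hY1m : Measurable Y1) (hY0m : Measurable Y0)
    (hYL : ∀ ω, Y ω ∈ L) (hY1L : ∀ ω, Y1 ω ∈ L) (hY0L : ∀ ω, Y0 ω ∈ L)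
    (hmZ : MeasurableSet {ω | Z ω = z})
    (hpos : 0 < μ {ω | Z ω = z}) (hlt : μ {ω | Z ω = z} < 1)
    (hcons1 : ∀ ω, Z ω = z → Y ω = Y1 ω)
    (hcons0 : ∀ ω, Z ω ≠ z → Y ω = Y0 ω)
    (hind1 : ∀ y' ∈ L,
      μ ({ω | Y1 ω = y'} ∩ {ω | Z ω = z}) = μ {ω | Y1 ω = y'} * μ {ω | Z ω = z})
    (hind0 : ∀ y' ∈ L,
      μ ({ω | Y0 ω = y'} ∩ {ω | Z ω = z}) = μ {ω | Y0 ω = y'} * μ {ω | Z ω = z})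
    (hmono : ∀ y ∈ L, μ {ω | Y0 ω = y ∧ Y1 ω ≠ y} = 0) :
    ∑ y ∈ L, y * (μ {ω | Y0 ω ≠ y ∧ Y1 ω = y}).toReal
      = (∫ ω, Y ω ∂(μ[|{ω | Z ω = z}])) - (∫ ω, Y ω ∂(μ[|{ω | Z ω ≠ z}])) := by
  set E : Set Ω := {ω | Z ω = z} with hE
  have hEc : {ω | Z ω ≠ z} = Eᶜ := rfl
  have hEne : μ E ≠ 0 := hpos.ne'
  have hEtop : μ E ≠ ⊤ := (hlt.trans ENNReal.one_lt_top).ne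
  have hcompl : μ Eᶜ = 1 - μ E := prob_compl_eq_one_sub hmZ
  have hEcne : μ Eᶜ ≠ 0 := by
    rw [hcompl]; exact (tsub_pos_of_lt hlt).ne'
  have hEctop : μ Eᶜ ≠ ⊤ := (measure_ne_top μ _)
  haveI : IsProbabilityMeasure (μ[|E]) := cond_isProbabilityMeasure hEne
  haveI : IsProbabilityMeasure (μ[|Eᶜ]) := cond_isProbabilityMeasure hEcne
  have hmsY1 : ∀ y : ℝ, MeasurableSet {ω | Y1 ω = y} := fun y =>
    hY1m (measurableSet_singleton y)
  have hmsY0 : ∀ y : ℝ, MeasurableSet {ω | Y0 ω = y} := fun y =>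
    hY0m (measurableSet_singleton y)
  -- conditional probabilities
  have hcond1 : ∀ y ∈ L, (μ[|E]) {ω | Y ω = y} = μ {ω | Y1 ω = y} := by
    intro y hy
    rw [cond_apply hmZ]
    have hset : E ∩ {ω | Y ω = y} = {ω | Y1 ω = y} ∩ E := by
      ext ω
      simp only [Set.mem_inter_iff, Set.mem_setOf_eq, hE]
      constructor
      · rintro ⟨hz, hYy⟩; exact ⟨(hcons1 ω hz) ▸ hYy, hz⟩
      · rintro ⟨hYy, hz⟩; exact ⟨hz, (hcons1 ω hz).symm ▸ hYy⟩
    rw [hset, hind1 y hy, mul_comm, mul_assoc, ENNReal.mul_inv_cancel hEne hEtop,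
      mul_one]
  have hcond0 : ∀ y ∈ L, (μ[|Eᶜ]) {ω | Y ω = y} = μ {ω | Y0 ω = y} := by
    intro y hy
    rw [cond_apply hmZ.compl]
    have hset : Eᶜ ∩ {ω | Y ω = y} = {ω | Y0 ω = y} ∩ Eᶜ := by
      ext ω
      simp only [Set.mem_inter_iff, Set.mem_compl_iff, Set.mem_setOf_eq, hE]
      constructor
      · rintro ⟨hz, hYy⟩; exact ⟨(hcons0 ω hz) ▸ hYy, hz⟩
      · rintro ⟨hYy, hz⟩; exact ⟨hz, (hcons0 ω hz).symm ▸ hYy⟩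
    have hmuEc : μ ({ω | Y0 ω = y} ∩ Eᶜ) = μ {ω | Y0 ω = y} * μ Eᶜ := by
      have hsplit : μ ({ω | Y0 ω = y} ∩ E) + μ ({ω | Y0 ω = y} \ E)
          = μ {ω | Y0 ω = y} := measure_inter_add_diff _ hmZ
      have hsplit2 : μ {ω | Y0 ω = y} * μ E + μ {ω | Y0 ω = y} * μ Eᶜ
          = μ {ω | Y0 ω = y} := by
        rw [← mul_add, measure_add_measure_compl hmZ, measure_univ, mul_one]
      have : μ {ω | Y0 ω = y} * μ E + μ ({ω | Y0 ω = y} ∩ Eᶜ)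
          = μ {ω | Y0 ω = y} * μ E + μ {ω | Y0 ω = y} * μ Eᶜ := by
        rw [hsplit2, ← hind0 y hy, ← Set.diff_eq_compl_inter, Set.inter_comm] at *
        rw [Set.diff_eq] at hsplit
        exact hsplit
      exact (ENNReal.add_right_inj
        (ENNReal.mul_ne_top (measure_ne_top μ _) hEtop)).mp this
    rw [hset, hmuEc, mul_comm, mul_assoc, ENNReal.mul_inv_cancel hEcne hEctop,
      mul_one]
  -- per-level identity
  have hkey : ∀ y ∈ L, (μ {ω | Y0 ω ≠ y ∧ Y1 ω = y}).toReal
      = (μ {ω | Y1 ω = y}).toReal - (μ {ω | Y0 ω = y}).toReal := by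
    intro y hy
    set A := {ω | Y1 ω = y}
    set B := {ω | Y0 ω = y}
    have h1 : μ (A ∩ B) + μ (A \ B) = μ A := measure_inter_add_diff _ (hmsY0 y)
    have h2 : μ (B ∩ A) + μ (B \ A) = μ B := measure_inter_add_diff _ (hmsY1 y)
    have hBA : μ (B \ A) = 0 := by
      have : B \ A = {ω | Y0 ω = y ∧ Y1 ω ≠ y} := by
        ext ω; simp [A, B, Set.mem_diff, Set.mem_setOf_eq]
      rw [this]; exact hmono y hy
    have hAB : {ω | Y0 ω ≠ y ∧ Y1 ω = y} = A \ B := by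
      ext ω; simp only [A, B, Set.mem_diff, Set.mem_setOf_eq]; tauto
    have hBeq : μ B = μ (A ∩ B) := by
      rw [← h2, hBA, add_zero, Set.inter_comm]
    have hA : (μ (A ∩ B)).toReal + (μ (A \ B)).toReal = (μ A).toReal := by
      rw [← ENNReal.toReal_add (measure_ne_top μ _) (measure_ne_top μ _), h1]
    rw [hAB]
    rw [hBeq]
    linarith
  -- rewrite integrals
  rw [hEc,
    integral_of_finsetValued (μ[|E]) L Y hYm hYL,
    integral_of_finsetValued (μ[|Eᶜ]) L Y hYm hYL,
    ← Finset.sum_sub_distrib]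
  refine Finset.sum_congr rfl fun y hy => ?_
  rw [hcond1 y hy, hcond0 y hy, hkey y hy, mul_sub]
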